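/- arXiv:2305.16890 — 2 statements merged into one kernel-verified Lean document; each statement's English description precedes it below -/
import Mathlib

section
/- Composability of assignment-preserving coresets: Let X₁, X₂ be disjoint finite point sets with weights w₁, w₂, and let (S₁, v₁), (S₂, v₂) be weighted sets such that for a fixed center set C and every cluster-weight tuple Γ, cost(X_j, w_j, C, Γ) ≤ (1+ε)·cost(S_j, v_j, C, Γ) and cost(S_j, v_j, C, Γ) ≤ (1+ε)·cost(X_j, w_j, C, Γ) for j = 1, 2 (whenever the respective assignment polytopes are nonempty). Then for every tuple Γ with ∑_i t_i = ∑_{x∈X₁∪X₂}(w₁∪w₂)(x), cost(X₁∪X₂, w₁∪w₂, C, Γ) ≤ (1+ε)·cost(S₁∪S₂, v₁∪v₂, C, Γ) and cost(S₁∪S₂, v₁∪v₂, C, Γ) ≤ (1+ε)·cost(X₁∪X₂, w₁∪w₂, C, Γ), using the fact that cost(X₁∪X₂, w, C, Γ) = min over splittings Γ = Γ₁ + Γ₂ of cost(X₁, w₁, C, Γ₁) + cost(X₂, w₂, C, Γ₂). -/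
/-- The constrained fractional assignment cost: the infimum over assignments
`σ` with row sums `u x` and column sums `t i` of `∑ i, ∑ x ∈ Y, σ x i * d x i`. -/
noncomputable def clCost {α : Type*} (k : ℕ) (Y : Finset α) (u : α → ℝ)
    (d : α → Fin k → ℝ) (t : Fin k → ℝ) : ℝ :=
  sInf {v : ℝ | ∃ σ : α → Fin k → ℝ, (∀ x i, 0 ≤ σ x i) ∧
    (∀ x ∈ Y, ∑ i, σ x i = u x) ∧ (∀ i, ∑ x ∈ Y, σ x i = t i) ∧
    v = ∑ i, ∑ x ∈ Y, σ x i * d x i}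

/-- The set whose infimum defines `clCost`. -/
def cSet {α : Type*} (k : ℕ) (Y : Finset α) (u : α → ℝ)
    (d : α → Fin k → ℝ) (t : Fin k → ℝ) : Set ℝ :=
  {v : ℝ | ∃ σ : α → Fin k → ℝ, (∀ x i, 0 ≤ σ x i) ∧
    (∀ x ∈ Y, ∑ i, σ x i = u x) ∧ (∀ i, ∑ x ∈ Y, σ x i = t i) ∧
    v = ∑ i, ∑ x ∈ Y, σ x i * d x i}

lemma clCost_def {α : Type*} (k : ℕ) (Y : Finset α) (u : α → ℝ)
    (d : α → Fin k → ℝ) (t : Fin k → ℝ) :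
    clCost k Y u d t = sInf (cSet k Y u d t) := rfl

lemma cSet_nonneg {α : Type*} {k : ℕ} {Y : Finset α} {u : α → ℝ}
    {d : α → Fin k → ℝ} {t : Fin k → ℝ} (hd : ∀ x i, 0 ≤ d x i) :
    ∀ r ∈ cSet k Y u d t, (0:ℝ) ≤ r := by
  rintro r ⟨σ, hσ0, -, -, rfl⟩
  exact Finset.sum_nonneg fun i _ => Finset.sum_nonneg fun x _ =>
    mul_nonneg (hσ0 x i) (hd x i)

lemma cSet_bdd {α : Type*} {k : ℕ} {Y : Finset α} {u : α → ℝ}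
    {d : α → Fin k → ℝ} {t : Fin k → ℝ} (hd : ∀ x i, 0 ≤ d x i) :
    BddBelow (cSet k Y u d t) :=
  ⟨0, fun r hr => cSet_nonneg hd r hr⟩

lemma cSet_nonempty {α : Type*} {k : ℕ} {Y : Finset α} {u : α → ℝ}
    {d : α → Fin k → ℝ} {t : Fin k → ℝ} (hu : ∀ x, 0 ≤ u x)
    (ht : ∀ i, 0 ≤ t i) (hsum : ∑ i, t i = ∑ x ∈ Y, u x) :
    (cSet k Y u d t).Nonempty := by
  by_cases hT : ∑ x ∈ Y, u x = 0
  · refine ⟨0, fun _ _ => 0, fun _ _ => le_rfl, ?_, ?_, by simp⟩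
    · intro x hx
      have := (Finset.sum_eq_zero_iff_of_nonneg (fun x _ => hu x)).mp hT x hx
      simp [this]
    · intro i
      have h0 : ∑ i, t i = 0 := hsum.trans hT
      have := (Finset.sum_eq_zero_iff_of_nonneg (fun i _ => ht i)).mp h0 i
        (Finset.mem_univ i)
      simp [this]
  · have hT0 : 0 < ∑ x ∈ Y, u x := lt_of_le_of_ne
      (Finset.sum_nonneg fun x _ => hu x) (Ne.symm hT)
    refine ⟨_, fun x i => u x * t i / (∑ x ∈ Y, u x), ?_, ?_, ?_, rfl⟩
    · intro x i
      exact div_nonneg (mul_nonneg (hu x) (ht i)) hT0.le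
    · intro x hx
      rw [← Finset.sum_div, ← Finset.mul_sum, hsum, mul_div_assoc,
        div_self hT0.ne', mul_one]
    · intro i
      rw [← Finset.sum_div, ← Finset.sum_mul, mul_comm, mul_div_assoc,
        div_self hT0.ne', mul_one]

lemma cSet_union {α : Type*} [DecidableEq α] {k : ℕ} {Y₁ Y₂ : Finset α}
    {u : α → ℝ} {d : α → Fin k → ℝ} {t₁ t₂ : Fin k → ℝ}
    (hdisj : Disjoint Y₁ Y₂) {a b : ℝ}
    (ha : a ∈ cSet k Y₁ u d t₁) (hb : b ∈ cSet k Y₂ u d t₂) :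
    a + b ∈ cSet k (Y₁ ∪ Y₂) u d (fun i => t₁ i + t₂ i) := by
  obtain ⟨σ₁, h10, h1r, h1c, rfl⟩ := ha
  obtain ⟨σ₂, h20, h2r, h2c, rfl⟩ := hb
  refine ⟨fun x i => if x ∈ Y₁ then σ₁ x i else σ₂ x i, ?_, ?_, ?_, ?_⟩
  · intro x i
    by_cases hx : x ∈ Y₁ <;> simp [hx, h10 x i, h20 x i]
  · intro x hx
    rcases Finset.mem_union.mp hx with hx1 | hx2
    · simp only [if_pos hx1]; exact h1r x hx1
    · have hx1 : x ∉ Y₁ := fun h => (Finset.disjoint_left.mp hdisj h) hx2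
      simp only [if_neg hx1]; exact h2r x hx2
  · intro i
    rw [Finset.sum_union hdisj]
    have e1 : ∑ x ∈ Y₁, (if x ∈ Y₁ then σ₁ x i else σ₂ x i) = ∑ x ∈ Y₁, σ₁ x i :=
      Finset.sum_congr rfl fun x hx => by simp [hx]
    have e2 : ∑ x ∈ Y₂, (if x ∈ Y₁ then σ₁ x i else σ₂ x i) = ∑ x ∈ Y₂, σ₂ x i :=
      Finset.sum_congr rfl fun x hx => by
        have hx1 : x ∉ Y₁ := fun h => (Finset.disjoint_left.mp hdisj h) hx
        simp [hx1]
    rw [e1, e2, h1c, h2c]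
  · rw [← Finset.sum_add_distrib]
    refine Finset.sum_congr rfl fun i _ => ?_
    rw [Finset.sum_union hdisj]
    have e1 : ∑ x ∈ Y₁, (if x ∈ Y₁ then σ₁ x i else σ₂ x i) * d x i
        = ∑ x ∈ Y₁, σ₁ x i * d x i :=
      Finset.sum_congr rfl fun x hx => by simp [hx]
    have e2 : ∑ x ∈ Y₂, (if x ∈ Y₁ then σ₁ x i else σ₂ x i) * d x i
        = ∑ x ∈ Y₂, σ₂ x i * d x i :=
      Finset.sum_congr rfl fun x hx => by
        have hx1 : x ∉ Y₁ := fun h => (Finset.disjoint_left.mp hdisj h) hx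
        simp [hx1]
    rw [e1, e2]

lemma cSet_split {α : Type*} [DecidableEq α] {k : ℕ} {Y₁ Y₂ : Finset α}
    {u : α → ℝ} {d : α → Fin k → ℝ} {t : Fin k → ℝ}
    (hdisj : Disjoint Y₁ Y₂) {r : ℝ} (hr : r ∈ cSet k (Y₁ ∪ Y₂) u d t) :
    ∃ t₁ t₂ r₁ r₂ : _, (∀ i, 0 ≤ t₁ i) ∧ (∀ i, 0 ≤ t₂ i) ∧
      (∀ i, t i = t₁ i + t₂ i) ∧
      (∑ i, t₁ i = ∑ x ∈ Y₁, u x) ∧ (∑ i, t₂ i = ∑ x ∈ Y₂, u x) ∧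
      r₁ ∈ cSet k Y₁ u d t₁ ∧ r₂ ∈ cSet k Y₂ u d t₂ ∧ r = r₁ + r₂ := by
  obtain ⟨σ, hσ0, hσr, hσc, rfl⟩ := hr
  refine ⟨fun i => ∑ x ∈ Y₁, σ x i, fun i => ∑ x ∈ Y₂, σ x i,
    ∑ i, ∑ x ∈ Y₁, σ x i * d x i, ∑ i, ∑ x ∈ Y₂, σ x i * d x i,
    fun i => Finset.sum_nonneg fun x _ => hσ0 x i,
    fun i => Finset.sum_nonneg fun x _ => hσ0 x i,
    fun i => by rw [← hσc i, Finset.sum_union hdisj],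
    ?_, ?_,
    ⟨σ, hσ0, fun x hx => hσr x (Finset.mem_union_left _ hx), fun _ => rfl, rfl⟩,
    ⟨σ, hσ0, fun x hx => hσr x (Finset.mem_union_right _ hx), fun _ => rfl, rfl⟩,
    ?_⟩
  · rw [Finset.sum_comm]
    exact Finset.sum_congr rfl fun x hx => hσr x (Finset.mem_union_left _ hx)
  · rw [Finset.sum_comm]
    exact Finset.sum_congr rfl fun x hx => hσr x (Finset.mem_union_right _ hx)
  · rw [← Finset.sum_add_distrib]
    exact Finset.sum_congr rfl fun i _ => Finset.sum_union hdisj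

/-- One-sided composability. -/
lemma clCost_union_le {α : Type*} [DecidableEq α] (k : ℕ) (ε : ℝ) (hε : 0 ≤ ε)
    (X₁ X₂ S₁ S₂ : Finset α) (hX : Disjoint X₁ X₂) (hS : Disjoint S₁ S₂)
    (w v : α → ℝ) (hw : ∀ x, 0 ≤ w x) (hv : ∀ x, 0 ≤ v x)
    (d : α → Fin k → ℝ) (hd : ∀ x i, 0 ≤ d x i)
    (htot₁ : ∑ x ∈ S₁, v x = ∑ x ∈ X₁, w x)
    (htot₂ : ∑ x ∈ S₂, v x = ∑ x ∈ X₂, w x)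
    (h₁ : ∀ t : Fin k → ℝ, (∀ i, 0 ≤ t i) → ∑ i, t i = ∑ x ∈ X₁, w x →
      clCost k X₁ w d t ≤ (1 + ε) * clCost k S₁ v d t)
    (h₂ : ∀ t : Fin k → ℝ, (∀ i, 0 ≤ t i) → ∑ i, t i = ∑ x ∈ X₂, w x →
      clCost k X₂ w d t ≤ (1 + ε) * clCost k S₂ v d t)
    (t : Fin k → ℝ) (ht : ∀ i, 0 ≤ t i)
    (hsum : ∑ i, t i = ∑ x ∈ X₁ ∪ X₂, w x) :
    clCost k (X₁ ∪ X₂) w d t ≤ (1 + ε) * clCost k (S₁ ∪ S₂) v d t := by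
  have hε1 : (0:ℝ) < 1 + ε := by linarith
  have hsum' : ∑ i, t i = ∑ x ∈ S₁ ∪ S₂, v x := by
    rw [Finset.sum_union hS, htot₁, htot₂, ← Finset.sum_union hX, hsum]
  have hneS : (cSet k (S₁ ∪ S₂) v d t).Nonempty := cSet_nonempty hv ht hsum'
  suffices h : ∀ b ∈ cSet k (S₁ ∪ S₂) v d t, clCost k (X₁ ∪ X₂) w d t ≤ (1 + ε) * b by
    have hle : clCost k (X₁ ∪ X₂) w d t / (1 + ε) ≤ sInf (cSet k (S₁ ∪ S₂) v d t) :=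
      le_csInf hneS fun b hb => (div_le_iff₀ hε1).mpr (by rw [mul_comm]; exact h b hb)
    rw [clCost_def k (S₁ ∪ S₂)]
    calc clCost k (X₁ ∪ X₂) w d t
        ≤ sInf (cSet k (S₁ ∪ S₂) v d t) * (1 + ε) := (div_le_iff₀ hε1).mp hle
      _ = (1 + ε) * sInf (cSet k (S₁ ∪ S₂) v d t) := mul_comm _ _
  intro b hb
  obtain ⟨t₁, t₂, b₁, b₂, ht₁, ht₂, htt, hs₁, hs₂, hb₁, hb₂, rfl⟩ := cSet_split hS hb
  have hsX₁ : ∑ i, t₁ i = ∑ x ∈ X₁, w x := hs₁.trans htot₁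
  have hsX₂ : ∑ i, t₂ i = ∑ x ∈ X₂, w x := hs₂.trans htot₂
  have hA := h₁ t₁ ht₁ hsX₁
  have hB := h₂ t₂ ht₂ hsX₂
  have hc₁ : clCost k S₁ v d t₁ ≤ b₁ := csInf_le (cSet_bdd hd) hb₁
  have hc₂ : clCost k S₂ v d t₂ ≤ b₂ := csInf_le (cSet_bdd hd) hb₂
  -- subadditivity
  have hne₁ : (cSet k X₁ w d t₁).Nonempty := cSet_nonempty hw ht₁ hsX₁
  have hne₂ : (cSet k X₂ w d t₂).Nonempty := cSet_nonempty hw ht₂ hsX₂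
  have key : ∀ a ∈ cSet k X₁ w d t₁, ∀ b' ∈ cSet k X₂ w d t₂,
      clCost k (X₁ ∪ X₂) w d t ≤ a + b' := by
    intro a ha b' hb'
    have hmem := cSet_union hX ha hb'
    have htfun : (fun i => t₁ i + t₂ i) = t := funext fun i => (htt i).symm
    rw [htfun] at hmem
    exact csInf_le (cSet_bdd hd) hmem
  have step1 : ∀ a ∈ cSet k X₁ w d t₁,
      clCost k (X₁ ∪ X₂) w d t - a ≤ clCost k X₂ w d t₂ := by
    intro a ha
    exact le_csInf hne₂ fun b' hb' => by linarith [key a ha b' hb']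
  have step2 : clCost k (X₁ ∪ X₂) w d t - clCost k X₂ w d t₂ ≤ clCost k X₁ w d t₁ :=
    le_csInf hne₁ fun a ha => by linarith [step1 a ha]
  have hm₁ : (1 + ε) * clCost k S₁ v d t₁ ≤ (1 + ε) * b₁ :=
    mul_le_mul_of_nonneg_left hc₁ hε1.le
  have hm₂ : (1 + ε) * clCost k S₂ v d t₂ ≤ (1 + ε) * b₂ :=
    mul_le_mul_of_nonneg_left hc₂ hε1.le
  have : (1 + ε) * (b₁ + b₂) = (1 + ε) * b₁ + (1 + ε) * b₂ := by ring
  linarith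

theorem stmt12 {α : Type*} [DecidableEq α] (k : ℕ) (hk : 0 < k) (ε : ℝ) (hε : 0 ≤ ε)
    (X₁ X₂ S₁ S₂ : Finset α) (hX : Disjoint X₁ X₂) (hS : Disjoint S₁ S₂)
    (w v : α → ℝ) (hw : ∀ x, 0 ≤ w x) (hv : ∀ x, 0 ≤ v x)
    (d : α → Fin k → ℝ) (hd : ∀ x i, 0 ≤ d x i)
    (htot₁ : ∑ x ∈ S₁, v x = ∑ x ∈ X₁, w x)
    (htot₂ : ∑ x ∈ S₂, v x = ∑ x ∈ X₂, w x)
    (hcs₁ : ∀ t : Fin k → ℝ, (∀ i, 0 ≤ t i) → ∑ i, t i = ∑ x ∈ X₁, w x →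
      clCost k X₁ w d t ≤ (1 + ε) * clCost k S₁ v d t ∧
      clCost k S₁ v d t ≤ (1 + ε) * clCost k X₁ w d t)
    (hcs₂ : ∀ t : Fin k → ℝ, (∀ i, 0 ≤ t i) → ∑ i, t i = ∑ x ∈ X₂, w x →
      clCost k X₂ w d t ≤ (1 + ε) * clCost k S₂ v d t ∧
      clCost k S₂ v d t ≤ (1 + ε) * clCost k X₂ w d t) :
    ∀ t : Fin k → ℝ, (∀ i, 0 ≤ t i) → ∑ i, t i = ∑ x ∈ X₁ ∪ X₂, w x →
      clCost k (X₁ ∪ X₂) w d t ≤ (1 + ε) * clCost k (S₁ ∪ S₂) v d t ∧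
      clCost k (S₁ ∪ S₂) v d t ≤ (1 + ε) * clCost k (X₁ ∪ X₂) w d t := by
  intro t ht hsum
  have hsum' : ∑ i, t i = ∑ x ∈ S₁ ∪ S₂, v x := by
    rw [Finset.sum_union hS, htot₁, htot₂, ← Finset.sum_union hX, hsum]
  constructor
  · exact clCost_union_le k ε hε X₁ X₂ S₁ S₂ hX hS w v hw hv d hd htot₁ htot₂
      (fun t' ht' hs' => (hcs₁ t' ht' hs').1)
      (fun t' ht' hs' => (hcs₂ t' ht' hs').1) t ht hsum
  · exact clCost_union_le k ε hε S₁ S₂ X₁ X₂ hS hX v w hv hw d hd htot₁.symm htot₂.symm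
      (fun t' ht' hs' => (hcs₁ t' ht' (hs'.trans htot₁)).2)
      (fun t' ht' hs' => (hcs₂ t' ht' (hs'.trans htot₂)).2) t ht hsum'
end

section
/- Decomposition of constrained assignment cost over a disjoint union: let X = X₁ ⊎ X₂ be a disjoint union of finite sets with weight function w, let d : X × [k] → ℝ≥0, and let Γ = (t₁,…,t_k) satisfy ∑_i t_i = ∑_{x∈X} w(x). Then cost(X, w, Γ) = min over all pairs of tuples Γ₁, Γ₂ ∈ (ℝ≥0)^k with Γ₁ + Γ₂ = Γ (componentwise), ∑_i (Γ₁)_i = ∑_{x∈X₁} w(x), and ∑_i (Γ₂)_i = ∑_{x∈X₂} w(x), of cost(X₁, w, Γ₁) + cost(X₂, w, Γ₂), where cost(Y, w, Γ') is the minimum of ∑_i ∑_{y∈Y} σ(y, i)·d(y, i) over assignments σ with row sums w(y) and column sums (Γ')_i. -/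
namespace ClAux

variable {α : Type*}

def clSet (k : ℕ) (Y : Finset α) (u : α → ℝ)
    (d : α → Fin k → ℝ) (t : Fin k → ℝ) : Set ℝ :=
  {v : ℝ | ∃ σ : α → Fin k → ℝ, (∀ x i, 0 ≤ σ x i) ∧
    (∀ x ∈ Y, ∑ i, σ x i = u x) ∧ (∀ i, ∑ x ∈ Y, σ x i = t i) ∧
    v = ∑ i, ∑ x ∈ Y, σ x i * d x i}

lemma clCost_eq (k : ℕ) (Y : Finset α) (u : α → ℝ)
    (d : α → Fin k → ℝ) (t : Fin k → ℝ) :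
    clCost k Y u d t = sInf (clSet k Y u d t) := rfl

lemma clSet_bddBelow (k : ℕ) (Y : Finset α) (u : α → ℝ)
    (d : α → Fin k → ℝ) (hd : ∀ x i, 0 ≤ d x i) (t : Fin k → ℝ) :
    BddBelow (clSet k Y u d t) := by
  refine ⟨0, fun v hv => ?_⟩
  obtain ⟨σ, hσ, -, -, rfl⟩ := hv
  exact Finset.sum_nonneg fun i _ => Finset.sum_nonneg fun x _ =>
    mul_nonneg (hσ x i) (hd x i)

lemma clCost_le (k : ℕ) (Y : Finset α) (u : α → ℝ)
    (d : α → Fin k → ℝ) (hd : ∀ x i, 0 ≤ d x i) (t : Fin k → ℝ)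
    (σ : α → Fin k → ℝ) (hσ : ∀ x i, 0 ≤ σ x i)
    (hrow : ∀ x ∈ Y, ∑ i, σ x i = u x) (hcol : ∀ i, ∑ x ∈ Y, σ x i = t i) :
    clCost k Y u d t ≤ ∑ i, ∑ x ∈ Y, σ x i * d x i :=
  csInf_le (clSet_bddBelow k Y u d hd t) ⟨σ, hσ, hrow, hcol, rfl⟩

/-- Feasibility: a proportional assignment exists. -/
lemma feasible_exists (k : ℕ) (hk : 0 < k) (Y : Finset α) (u : α → ℝ)
    (hu : ∀ x, 0 ≤ u x) (t : Fin k → ℝ) (ht : ∀ i, 0 ≤ t i)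
    (hsum : ∑ i, t i = ∑ x ∈ Y, u x) :
    ∃ σ : α → Fin k → ℝ, (∀ x i, 0 ≤ σ x i) ∧
      (∀ x ∈ Y, ∑ i, σ x i = u x) ∧ (∀ i, ∑ x ∈ Y, σ x i = t i) := by
  by_cases h0 : (∑ i, t i) = 0
  · refine ⟨fun _ _ => 0, fun _ _ => le_rfl, ?_, ?_⟩
    · intro x hx
      have hsum0 : ∑ x ∈ Y, u x = 0 := by rw [← hsum, h0]
      have := (Finset.sum_eq_zero_iff_of_nonneg (fun x _ => hu x)).mp hsum0 x hx
      simp [this]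
    · intro i
      have hti : t i = 0 :=
        (Finset.sum_eq_zero_iff_of_nonneg (fun i _ => ht i)).mp h0 i (Finset.mem_univ i)
      simp [hti]
  · have hSpos : 0 < ∑ i, t i :=
      lt_of_le_of_ne (Finset.sum_nonneg fun i _ => ht i) (Ne.symm h0)
    refine ⟨fun x i => u x * t i / (∑ i, t i), fun x i =>
      div_nonneg (mul_nonneg (hu x) (ht i)) hSpos.le, ?_, ?_⟩
    · intro x hx
      rw [← Finset.sum_div, ← Finset.mul_sum]
      field_simp
    · intro i
      rw [← Finset.sum_div, ← Finset.sum_mul, ← hsum]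
      field_simp

end ClAux

theorem stmt13 {α : Type*} [DecidableEq α] (k : ℕ) (hk : 0 < k)
    (X₁ X₂ : Finset α) (hdisj : Disjoint X₁ X₂)
    (w : α → ℝ) (hw : ∀ x, 0 ≤ w x)
    (d : α → Fin k → ℝ) (hd : ∀ x i, 0 ≤ d x i)
    (t : Fin k → ℝ) (ht : ∀ i, 0 ≤ t i)
    (htot : ∑ i, t i = ∑ x ∈ X₁ ∪ X₂, w x) :
    clCost k (X₁ ∪ X₂) w d t =
      sInf {v : ℝ | ∃ t₁ t₂ : Fin k → ℝ, (∀ i, 0 ≤ t₁ i) ∧ (∀ i, 0 ≤ t₂ i) ∧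
        (∀ i, t₁ i + t₂ i = t i) ∧
        (∑ i, t₁ i = ∑ x ∈ X₁, w x) ∧ (∑ i, t₂ i = ∑ x ∈ X₂, w x) ∧
        v = clCost k X₁ w d t₁ + clCost k X₂ w d t₂} := by
  classical
  open ClAux in
  set T : Set ℝ := {v : ℝ | ∃ t₁ t₂ : Fin k → ℝ, (∀ i, 0 ≤ t₁ i) ∧ (∀ i, 0 ≤ t₂ i) ∧
        (∀ i, t₁ i + t₂ i = t i) ∧
        (∑ i, t₁ i = ∑ x ∈ X₁, w x) ∧ (∑ i, t₂ i = ∑ x ∈ X₂, w x) ∧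
        v = clCost k X₁ w d t₁ + clCost k X₂ w d t₂} with hT
  -- Any feasible σ on the union induces a split whose clCost sum is ≤ its value.
  have split : ∀ σ : α → Fin k → ℝ, (∀ x i, 0 ≤ σ x i) →
      (∀ x ∈ X₁ ∪ X₂, ∑ i, σ x i = w x) → (∀ i, ∑ x ∈ X₁ ∪ X₂, σ x i = t i) →
      ∃ e ∈ T, e ≤ ∑ i, ∑ x ∈ X₁ ∪ X₂, σ x i * d x i := by
    intro σ hσ hrow hcol
    set t₁ : Fin k → ℝ := fun i => ∑ x ∈ X₁, σ x i with ht₁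
    set t₂ : Fin k → ℝ := fun i => ∑ x ∈ X₂, σ x i with ht₂
    refine ⟨clCost k X₁ w d t₁ + clCost k X₂ w d t₂, ?_, ?_⟩
    · refine ⟨t₁, t₂, fun i => Finset.sum_nonneg fun x _ => hσ x i,
        fun i => Finset.sum_nonneg fun x _ => hσ x i, ?_, ?_, ?_, rfl⟩
      · intro i
        rw [ht₁, ht₂, ← hcol i, Finset.sum_union hdisj]
      · rw [Finset.sum_comm]
        exact Finset.sum_congr rfl fun x hx => hrow x (Finset.mem_union_left _ hx)
      · rw [Finset.sum_comm]
        exact Finset.sum_congr rfl fun x hx => hrow x (Finset.mem_union_right _ hx)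
    · rw [show (∑ i, ∑ x ∈ X₁ ∪ X₂, σ x i * d x i)
          = (∑ i, ∑ x ∈ X₁, σ x i * d x i) + (∑ i, ∑ x ∈ X₂, σ x i * d x i) by
        rw [← Finset.sum_add_distrib]
        exact Finset.sum_congr rfl fun i _ => Finset.sum_union hdisj]
      gcongr
      · exact ClAux.clCost_le k X₁ w d hd t₁ σ hσ
          (fun x hx => hrow x (Finset.mem_union_left _ hx)) (fun i => rfl)
      · exact ClAux.clCost_le k X₂ w d hd t₂ σ hσ
          (fun x hx => hrow x (Finset.mem_union_right _ hx)) (fun i => rfl)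
  -- A canonical feasible σ on the union.
  obtain ⟨σ₀, hσ₀, hrow₀, hcol₀⟩ := ClAux.feasible_exists k hk (X₁ ∪ X₂) w hw t ht htot
  have hSne : (ClAux.clSet k (X₁ ∪ X₂) w d t).Nonempty :=
    ⟨∑ i, ∑ x ∈ X₁ ∪ X₂, σ₀ x i * d x i, σ₀, hσ₀, hrow₀, hcol₀, rfl⟩
  obtain ⟨e₀, he₀T, -⟩ := split σ₀ hσ₀ hrow₀ hcol₀
  have hTne : T.Nonempty := ⟨e₀, he₀T⟩
  rw [ClAux.clCost_eq]
  apply le_antisymm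
  · -- clCost union ≤ sInf T
    apply le_csInf hTne
    rintro v ⟨t₁, t₂, ht₁, ht₂, hadd, hs₁, hs₂, rfl⟩
    obtain ⟨σ₁, hσ₁, hrow₁, hcol₁⟩ := ClAux.feasible_exists k hk X₁ w hw t₁ ht₁ hs₁
    obtain ⟨σ₂, hσ₂, hrow₂, hcol₂⟩ := ClAux.feasible_exists k hk X₂ w hw t₂ ht₂ hs₂
    have hAne : (ClAux.clSet k X₁ w d t₁).Nonempty :=
      ⟨∑ i, ∑ x ∈ X₁, σ₁ x i * d x i, σ₁, hσ₁, hrow₁, hcol₁, rfl⟩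
    have hBne : (ClAux.clSet k X₂ w d t₂).Nonempty :=
      ⟨∑ i, ∑ x ∈ X₂, σ₂ x i * d x i, σ₂, hσ₂, hrow₂, hcol₂, rfl⟩
    have key : ∀ a ∈ ClAux.clSet k X₁ w d t₁, ∀ b ∈ ClAux.clSet k X₂ w d t₂,
        sInf (ClAux.clSet k (X₁ ∪ X₂) w d t) ≤ a + b := by
      rintro a ⟨τ₁, hτ₁, hrowa, hcola, rfl⟩ b ⟨τ₂, hτ₂, hrowb, hcolb, rfl⟩
      set σ : α → Fin k → ℝ := fun x i => if x ∈ X₁ then τ₁ x i else τ₂ x i with hσdef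
      have hσnn : ∀ x i, 0 ≤ σ x i := by
        intro x i; rw [hσdef]; dsimp only
        split <;> [exact hτ₁ x i; exact hτ₂ x i]
      have hrows : ∀ x ∈ X₁ ∪ X₂, ∑ i, σ x i = w x := by
        intro x hx
        rcases Finset.mem_union.mp hx with h | h
        · simp only [hσdef, if_pos h]; exact hrowa x h
        · have hx1 : x ∉ X₁ := fun hc => (Finset.disjoint_left.mp hdisj hc) h
          simp only [hσdef, if_neg hx1]; exact hrowb x h
      have hcols : ∀ i, ∑ x ∈ X₁ ∪ X₂, σ x i = t i := by
        intro i
        rw [Finset.sum_union hdisj, ← hadd i, ← hcola i, ← hcolb i]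
        congr 1
        · exact Finset.sum_congr rfl fun x hx => by simp [hσdef, hx]
        · refine Finset.sum_congr rfl fun x hx => ?_
          have hx1 : x ∉ X₁ := fun hc => (Finset.disjoint_left.mp hdisj hc) hx
          simp [hσdef, hx1]
      have hval : (∑ i, ∑ x ∈ X₁ ∪ X₂, σ x i * d x i)
          = (∑ i, ∑ x ∈ X₁, τ₁ x i * d x i) + (∑ i, ∑ x ∈ X₂, τ₂ x i * d x i) := by
        rw [← Finset.sum_add_distrib]
        refine Finset.sum_congr rfl fun i _ => ?_
        rw [Finset.sum_union hdisj]
        congr 1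
        · exact Finset.sum_congr rfl fun x hx => by simp [hσdef, hx]
        · refine Finset.sum_congr rfl fun x hx => ?_
          have hx1 : x ∉ X₁ := fun hc => (Finset.disjoint_left.mp hdisj hc) hx
          simp [hσdef, hx1]
      calc sInf (ClAux.clSet k (X₁ ∪ X₂) w d t)
          ≤ ∑ i, ∑ x ∈ X₁ ∪ X₂, σ x i * d x i :=
            csInf_le (ClAux.clSet_bddBelow k _ w d hd t) ⟨σ, hσnn, hrows, hcols, rfl⟩
        _ = _ := hval
    -- from key, conclude sInf S ≤ sInf A + sInf B
    have h1 : ∀ a ∈ ClAux.clSet k X₁ w d t₁,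
        sInf (ClAux.clSet k (X₁ ∪ X₂) w d t) - a ≤ clCost k X₂ w d t₂ := by
      intro a ha
      rw [ClAux.clCost_eq]
      apply le_csInf hBne
      intro b hb
      linarith [key a ha b hb]
    have h2 : sInf (ClAux.clSet k (X₁ ∪ X₂) w d t) - clCost k X₂ w d t₂
        ≤ clCost k X₁ w d t₁ := by
      rw [ClAux.clCost_eq k X₁]
      apply le_csInf hAne
      intro a ha
      linarith [h1 a ha]
    linarith
  · -- sInf T ≤ clCost union
    apply le_csInf hSne
    rintro v ⟨σ, hσ, hrow, hcol, rfl⟩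
    obtain ⟨e, heT, hev⟩ := split σ hσ hrow hcol
    calc sInf T ≤ e := by
          apply csInf_le _ heT
          refine ⟨0, fun v hv => ?_⟩
          obtain ⟨t₁, t₂, h1, h2, -, hs1, hs2, rfl⟩ := hv
          obtain ⟨τ₁, hτ₁, hr₁, hc₁⟩ := ClAux.feasible_exists k hk X₁ w hw t₁ h1 hs1
          obtain ⟨τ₂, hτ₂, hr₂, hc₂⟩ := ClAux.feasible_exists k hk X₂ w hw t₂ h2 hs2
          have hA : 0 ≤ clCost k X₁ w d t₁ := by
            rw [ClAux.clCost_eq]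
            have hne : (ClAux.clSet k X₁ w d t₁).Nonempty :=
              ⟨∑ i, ∑ x ∈ X₁, τ₁ x i * d x i, τ₁, hτ₁, hr₁, hc₁, rfl⟩
            apply le_csInf hne
            rintro b ⟨ρ, hρ, -, -, rfl⟩
            exact Finset.sum_nonneg fun i _ => Finset.sum_nonneg fun x _ =>
              mul_nonneg (hρ x i) (hd x i)
          have hB : 0 ≤ clCost k X₂ w d t₂ := by
            rw [ClAux.clCost_eq]
            have hne : (ClAux.clSet k X₂ w d t₂).Nonempty :=
              ⟨∑ i, ∑ x ∈ X₂, τ₂ x i * d x i, τ₂, hτ₂, hr₂, hc₂, rfl⟩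
            apply le_csInf hne
            rintro b ⟨ρ, hρ, -, -, rfl⟩
            exact Finset.sum_nonneg fun i _ => Finset.sum_nonneg fun x _ =>
              mul_nonneg (hρ x i) (hd x i)
          linarith
      _ ≤ _ := hev
end
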